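/- Let X be a set with two metrics d and d', let e ∈ X, and let μ be a measure on X defined on a σ-algebra containing all d-closed balls and all d'-closed balls centered at e. Assume there are K, Q, r₀, C > 0 such that μ(B_d(e,r)) = K·r^Q for every r ≥ r₀, and such that |d(e,p) − d'(e,p)| ≤ C / (d(e,p) + d'(e,p)) for every p ∈ X with p ≠ e. Then there exist K' > 0 and r₁ > 0 such that |μ(B_{d'}(e,r)) − K·r^Q| ≤ K'·r^{Q−2} for every r ≥ r₁, where B_d(e,r) and B_{d'}(e,r) denote the closed balls of radius r centered at e for d and d' respectively. -/

import Mathlib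

open MeasureTheory

private lemma pow_one_add_le_aux (x : ℝ) (hx0 : 0 ≤ x) (hx1 : x ≤ 1) (n : ℕ) :
    (1 + x) ^ n ≤ 1 + (2 ^ n - 1) * x := by
  induction n with
  | zero => simp
  | succ n ih =>
    rw [pow_succ, pow_succ 2 n]
    have h1 : (0:ℝ) ≤ (1 + x) ^ n := by positivity
    have h2 : (0:ℝ) < 2 ^ n := by positivity
    have h4 : (1:ℝ) ≤ 2 ^ n := by
      calc (1:ℝ) = 1 ^ n := (one_pow n).symm
      _ ≤ 2 ^ n := pow_le_pow_left₀ (by norm_num) (by norm_num) n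
    have h3 : (0:ℝ) ≤ (2 ^ n - 1) * (x * (1 - x)) :=
      mul_nonneg (by linarith) (mul_nonneg hx0 (by linarith))
    nlinarith [mul_le_mul_of_nonneg_right ih (by linarith : (0:ℝ) ≤ 1 + x)]

set_option maxHeartbeats 1000000 in
/-- if `μ(B_d(e,r)) = K·r^Q` for `r ≥ r₀` and
`|d(e,p) − d'(e,p)| ≤ C/(d(e,p) + d'(e,p))` for `p ≠ e`, then
`|μ(B_{d'}(e,r)) − K·r^Q| ≤ K'·r^{Q−2}` for all large `r`. -/
theorem stmt_12 {X : Type*} [MeasurableSpace X] (d d' : X → X → ℝ) (e : X)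
    -- `d` is a metric on `X`
    (hd_eq : ∀ x y : X, d x y = 0 ↔ x = y)
    (hd_symm : ∀ x y : X, d x y = d y x)
    (hd_tri : ∀ x y z : X, d x z ≤ d x y + d y z)
    -- `d'` is a metric on `X`
    (hd'_eq : ∀ x y : X, d' x y = 0 ↔ x = y)
    (hd'_symm : ∀ x y : X, d' x y = d' y x)
    (hd'_tri : ∀ x y z : X, d' x z ≤ d' x y + d' y z)
    (μ : Measure X)
    -- the σ-algebra contains all closed balls centered at `e`
    (hmeas : ∀ r : ℝ, MeasurableSet {p : X | d e p ≤ r})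
    (hmeas' : ∀ r : ℝ, MeasurableSet {p : X | d' e p ≤ r})
    (K Q r₀ C : ℝ) (hK : 0 < K) (hQ : 0 < Q) (hr₀ : 0 < r₀) (hC : 0 < C)
    (hvol : ∀ r : ℝ, r₀ ≤ r → μ {p : X | d e p ≤ r} = ENNReal.ofReal (K * r ^ Q))
    (hclose : ∀ p : X, p ≠ e → |d e p - d' e p| ≤ C / (d e p + d' e p)) :
    ∃ K' > (0:ℝ), ∃ r₁ > (0:ℝ), ∀ r : ℝ, r₁ ≤ r →
      |(μ {p : X | d' e p ≤ r}).toReal - K * r ^ Q| ≤ K' * r ^ (Q - 2) := by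
  -- basic facts about the metrics
  have hdee : d e e = 0 := (hd_eq e e).mpr rfl
  have hd'ee : d' e e = 0 := (hd'_eq e e).mpr rfl
  have hd_nonneg : ∀ p, 0 ≤ d e p := by
    intro p
    have h1 := hd_tri e p e
    have h2 := hd_symm p e
    rw [hdee] at h1
    linarith [h2 ▸ h1]
  have hd'_nonneg : ∀ p, 0 ≤ d' e p := by
    intro p
    have h1 := hd'_tri e p e
    have h2 := hd'_symm p e
    rw [hd'ee] at h1
    linarith [h2 ▸ h1]
  set n : ℕ := ⌈Q⌉₊ with hn
  have hn1 : 1 ≤ n := Nat.one_le_iff_ne_zero.mpr (by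
    simp only [hn, ne_eq, Nat.ceil_eq_zero, not_le]
    exact hQ)
  have hQn : Q ≤ (n : ℝ) := Nat.le_ceil Q
  have hn2 : (n : ℝ) ≤ 2 ^ n := by exact_mod_cast (Nat.lt_two_pow_self (n := n)).le
  refine ⟨K * 2 ^ n * C, by positivity, max (max 1 (Real.sqrt C)) (r₀ + C), by
    have : (0:ℝ) < 1 := one_pos
    have := le_max_left (max 1 (Real.sqrt C)) (r₀ + C)
    have := le_max_left (1:ℝ) (Real.sqrt C)
    linarith [le_trans (le_max_left (1:ℝ) (Real.sqrt C)) (le_max_left _ (r₀ + C))], ?_⟩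
  intro r hr
  have hr1 : (1:ℝ) ≤ r :=
    le_trans (le_trans (le_max_left _ _) (le_max_left _ _)) hr
  have hrpos : (0:ℝ) < r := by linarith
  have hrsqrt : Real.sqrt C ≤ r :=
    le_trans (le_trans (le_max_right _ _) (le_max_left _ _)) hr
  have hrr0C : r₀ + C ≤ r := le_trans (le_max_right _ _) hr
  have hCr2 : C / r ^ 2 ≤ 1 := by
    rw [div_le_one (by positivity)]
    calc C = Real.sqrt C ^ 2 := (Real.sq_sqrt hC.le).symm
    _ ≤ r ^ 2 := by nlinarith [Real.sqrt_nonneg C]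
  have hCr_le : C / r ≤ C := div_le_self hC.le hr1
  have ha : r₀ ≤ r - C / r := by linarith
  have hbnn : r₀ ≤ r + C / r := by
    have : 0 ≤ C / r := by positivity
    linarith
  -- set inclusions
  have hsub1 : {p : X | d e p ≤ r - C / r} ⊆ {p : X | d' e p ≤ r} := by
    intro p hp
    simp only [Set.mem_setOf_eq] at hp ⊢
    by_cases hpe : p = e
    · rw [hpe, hd'ee]; linarith
    · have hcl := hclose p hpe
      have h1 : d' e p - d e p ≤ C / (d e p + d' e p) := by
        have := abs_le.mp hcl
        linarith [this.1]
      by_contra hcon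
      push_neg at hcon
      have hsum : r < d e p + d' e p := by
        have := hd_nonneg p
        linarith
      have h2 : C / (d e p + d' e p) ≤ C / r :=
        div_le_div_of_nonneg_left hC.le hrpos hsum.le
      linarith
  have hsub2 : {p : X | d' e p ≤ r} ⊆ {p : X | d e p ≤ r + C / r} := by
    intro p hp
    simp only [Set.mem_setOf_eq] at hp ⊢
    by_cases hpe : p = e
    · rw [hpe, hdee]; positivity
    · have hcl := hclose p hpe
      have h1 : d e p - d' e p ≤ C / (d e p + d' e p) := (abs_le.mp hcl).2
      by_cases hle : d e p ≤ r
      · have : 0 ≤ C / r := by positivity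
        linarith
      · push_neg at hle
        have hsum : r < d e p + d' e p := by
          have := hd'_nonneg p
          linarith
        have h2 : C / (d e p + d' e p) ≤ C / r :=
          div_le_div_of_nonneg_left hC.le hrpos hsum.le
        linarith
  -- measure bounds
  have hμ1 : ENNReal.ofReal (K * (r - C / r) ^ Q) ≤ μ {p : X | d' e p ≤ r} := by
    rw [← hvol _ ha]
    exact measure_mono hsub1
  have hμ2 : μ {p : X | d' e p ≤ r} ≤ ENNReal.ofReal (K * (r + C / r) ^ Q) := by
    rw [← hvol _ hbnn]
    exact measure_mono hsub2
  have hfin : μ {p : X | d' e p ≤ r} ≠ ⊤ :=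
    ne_top_of_le_ne_top ENNReal.ofReal_ne_top hμ2
  have hapos : (0:ℝ) < r - C / r := lt_of_lt_of_le hr₀ ha
  have hbpos : (0:ℝ) < r + C / r := lt_of_lt_of_le hr₀ hbnn
  have hT2 : (μ {p : X | d' e p ≤ r}).toReal ≤ K * (r + C / r) ^ Q := by
    have h := ENNReal.toReal_mono ENNReal.ofReal_ne_top hμ2
    rwa [ENNReal.toReal_ofReal (by positivity)] at h
  have hT1 : K * (r - C / r) ^ Q ≤ (μ {p : X | d' e p ≤ r}).toReal := by
    have h := ENNReal.toReal_mono hfin hμ1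
    rwa [ENNReal.toReal_ofReal (by positivity)] at h
  -- rpow estimates
  set x : ℝ := C / r ^ 2 with hxdef
  have hx0 : 0 ≤ x := by positivity
  have hrQpos : (0:ℝ) < r ^ Q := Real.rpow_pos_of_pos hrpos Q
  have hb_eq : r + C / r = r * (1 + x) := by
    field_simp [hxdef]
    rw [hxdef]; field_simp
  have ha_eq : r - C / r = r * (1 - x) := by
    field_simp [hxdef]
    rw [hxdef]; field_simp
  have h1mx : (0:ℝ) < 1 - x := by
    have : 0 < r * (1 - x) := ha_eq ▸ hapos
    nlinarith [this, hrpos]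
  have key_up : (r + C / r) ^ Q ≤ r ^ Q * (1 + 2 ^ n * x) := by
    rw [hb_eq, Real.mul_rpow hrpos.le (by linarith)]
    have h1 : (1 + x) ^ Q ≤ (1 + x) ^ (n : ℝ) :=
      Real.rpow_le_rpow_of_exponent_le (by linarith) hQn
    rw [Real.rpow_natCast] at h1
    have h2 := pow_one_add_le_aux x hx0 hCr2 n
    have h5 : (1 + x) ^ Q ≤ 1 + 2 ^ n * x := by linarith
    exact mul_le_mul_of_nonneg_left h5 hrQpos.le
  have key_lo : r ^ Q * (1 - 2 ^ n * x) ≤ (r - C / r) ^ Q := by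
    rw [ha_eq, Real.mul_rpow hrpos.le h1mx.le]
    have h1 : (1 - x) ^ (n : ℝ) ≤ (1 - x) ^ Q :=
      Real.rpow_le_rpow_of_exponent_ge h1mx (by linarith) hQn
    rw [Real.rpow_natCast] at h1
    have h2 : 1 + (n : ℝ) * (-x) ≤ (1 + (-x)) ^ n :=
      one_add_mul_le_pow (by linarith) n
    have h4 : (1 : ℝ) + -x = 1 - x := by ring
    rw [h4] at h2
    have h6 : (n : ℝ) * x ≤ 2 ^ n * x := mul_le_mul_of_nonneg_right hn2 hx0
    have h5 : 1 - 2 ^ n * x ≤ (1 - x) ^ Q := by linarith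
    exact mul_le_mul_of_nonneg_left h5 hrQpos.le
  have hrQ2 : r ^ (Q - 2) = r ^ Q / r ^ 2 := by
    rw [Real.rpow_sub hrpos]
    norm_num [Real.rpow_two]
  have e1 : K * (r ^ Q * (1 + 2 ^ n * x)) = K * r ^ Q + K * 2 ^ n * C * (r ^ Q / r ^ 2) := by
    rw [hxdef]; field_simp
  have e2 : K * (r ^ Q * (1 - 2 ^ n * x)) = K * r ^ Q - K * 2 ^ n * C * (r ^ Q / r ^ 2) := by
    rw [hxdef]; field_simp
  have u1 := mul_le_mul_of_nonneg_left key_up hK.le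
  have u2 := mul_le_mul_of_nonneg_left key_lo hK.le
  rw [e1] at u1
  rw [e2] at u2
  rw [hrQ2, abs_le]
  constructor
  · linarith
  · linarith
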